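/- Fix a prime p. Let C be a chain complex of finitely generated abelian groups. Then for every n, the natural homomorphism (ℚ/ℤ_(p)) ⊗_ℤ H_n(C) → H_n((ℚ/ℤ_(p)) ⊗_ℤ C) has kernel and cokernel that are finite p-groups. -/

import Mathlib

open TensorProduct

/-- The subring `ℤ_(p)` of `ℚ` consisting of fractions whose denominator is coprime to `p`. -/
def ZLoc (p : ℕ) : Subring ℚ where
  carrier := {q : ℚ | p.Coprime q.den}
  zero_mem' := by simp [Set.mem_setOf_eq, Rat.den_zero]
  one_mem' := by simp [Set.mem_setOf_eq, Rat.den_one]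
  add_mem' := by
    intro a b ha hb
    exact Nat.Coprime.coprime_dvd_right (Rat.add_den_dvd a b) (Nat.Coprime.mul_right ha hb)
  mul_mem' := by
    intro a b ha hb
    exact Nat.Coprime.coprime_dvd_right (Rat.mul_den_dvd a b) (Nat.Coprime.mul_right ha hb)
  neg_mem' := by
    intro a ha
    simpa [Set.mem_setOf_eq, Rat.den_neg_eq_den] using ha

/-- The abelian group `ℚ/ℤ_(p)`. -/
abbrev QmodZLoc (p : ℕ) := ℚ ⧸ (ZLoc p).toAddSubgroup

/-- The `(n+1)`-st homology of a chain complex `(C, d)` with `d n : C (n+1) → C n`: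
the quotient of the cycles `ker (d n) ⊆ C (n+1)` by the boundaries `range (d (n+1))`. -/
abbrev homologyAt (C : ℤ → Type) [∀ n, AddCommGroup (C n)]
    (d : ∀ n : ℤ, C (n + 1) →ₗ[ℤ] C n) (n : ℤ) :=
  LinearMap.ker (d n) ⧸
    Submodule.comap (LinearMap.ker (d n)).subtype (LinearMap.range (d (n + 1)))

variable {p : ℕ}

lemma ZLoc.intCast_mem (p : ℕ) (a : ℤ) : (a : ℚ) ∈ (ZLoc p).toAddSubgroup := by
  have : ((a:ℚ)).den = 1 := Rat.den_intCast a
  show p.Coprime _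
  simp [ZLoc, this]

lemma QmodZLoc.exists_pow_smul_eq_zero (hp : p.Prime) (x : QmodZLoc p) :
    ∃ k : ℕ, ((p : ℤ) ^ k) • x = 0 := by
  obtain ⟨q, rfl⟩ := QuotientAddGroup.mk_surjective x
  set k := q.den.factorization p with hk
  refine ⟨k, ?_⟩
  have hden : (p : ℕ) ^ k * (q.den / p ^ k) = q.den := Nat.ordProj_mul_ordCompl_eq_self q.den p
  set u : ℕ := q.den / p ^ k with hu
  have hcop : p.Coprime u := Nat.coprime_ordCompl hp q.den_nz
  have hu0 : u ≠ 0 := by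
    intro h; rw [h, mul_zero] at hden; exact q.den_nz hden.symm
  have h0 : (u : ℚ) ≠ 0 := by exact_mod_cast hu0
  have hp0 : ((p:ℚ))^k ≠ 0 := by
    have : (p:ℚ) ≠ 0 := by exact_mod_cast hp.ne_zero
    exact pow_ne_zero _ this
  have hq : ((p:ℚ) ^ k) * q = (q.num : ℚ) / (u : ℚ) := by
    have hd : ((q.den : ℚ)) = (p:ℚ)^k * u := by exact_mod_cast hden.symm
    rw [eq_div_iff h0]
    conv_lhs => rw [← Rat.num_div_den q]
    rw [hd]
    field_simp
  have : ((p:ℤ)^k) • (QuotientAddGroup.mk q : QmodZLoc p) =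
      QuotientAddGroup.mk (((p:ℚ)^k) * q) := by
    rw [← QuotientAddGroup.mk_zsmul]
    congr 1
    rw [zsmul_eq_mul]
    push_cast
    ring
  rw [this, hq]
  rw [QuotientAddGroup.eq_zero_iff]
  show p.Coprime _
  have hdvd : ((q.num : ℚ) / (u : ℚ)).den ∣ u := by
    have h1 : ((Rat.divInt q.num (u:ℤ)).den : ℤ) ∣ (u:ℤ) := Rat.den_dvd _ _
    rw [Rat.divInt_eq_div] at h1
    push_cast at h1
    exact_mod_cast h1
  exact Nat.Coprime.coprime_dvd_right hdvd hcop

lemma QmodZLoc.smul_surjective (m : ℤ) (hm : m ≠ 0) :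
    Function.Surjective (fun y : QmodZLoc p => m • y) := by
  intro x
  obtain ⟨q, rfl⟩ := QuotientAddGroup.mk_surjective x
  refine ⟨QuotientAddGroup.mk (q / (m:ℚ)), ?_⟩
  show m • (QuotientAddGroup.mk (q / (m:ℚ)) : QmodZLoc p) = _
  rw [← QuotientAddGroup.mk_zsmul]
  congr 1
  have : (m : ℚ) ≠ 0 := by exact_mod_cast hm
  rw [zsmul_eq_mul]
  field_simp

lemma QmodZLoc.zsmul_mk (m : ℤ) (q : ℚ) :
    m • (QuotientAddGroup.mk q : QmodZLoc p) = QuotientAddGroup.mk ((m:ℚ) * q) := by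
  rw [← QuotientAddGroup.mk_zsmul]
  congr 1

section Tensor

variable (p : ℕ)

lemma tensor_pow_smul (hp : p.Prime) (M : Type) [AddCommGroup M] (x : QmodZLoc p ⊗[ℤ] M) :
    ∃ k : ℕ, ((p:ℤ) ^ k) • x = 0 := by
  induction x using TensorProduct.induction_on with
  | zero => exact ⟨0, smul_zero _⟩
  | tmul q m =>
      obtain ⟨k, hk⟩ := QmodZLoc.exists_pow_smul_eq_zero hp q
      exact ⟨k, by rw [TensorProduct.smul_tmul', hk, TensorProduct.zero_tmul]⟩
  | add x y hx hy =>
      obtain ⟨k, hk⟩ := hx; obtain ⟨l, hl⟩ := hy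
      refine ⟨k + l, ?_⟩
      have h1 : ((p:ℤ)^(k+l)) • x = ((p:ℤ)^l) • (((p:ℤ)^k) • x) := by
        rw [← mul_smul, ← pow_add, add_comm l k]
      have h2 : ((p:ℤ)^(k+l)) • y = ((p:ℤ)^k) • (((p:ℤ)^l) • y) := by
        rw [← mul_smul, ← pow_add]
      rw [smul_add, h1, h2, hk, hl, smul_zero, smul_zero, add_zero]

lemma tensor_eq_zero (M : Type) [AddCommGroup M] (c : ℤ) (hc : c ≠ 0)
    (hM : ∀ m : M, c • m = 0) (x : QmodZLoc p ⊗[ℤ] M) : x = 0 := by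
  induction x using TensorProduct.induction_on with
  | zero => rfl
  | tmul q m =>
      obtain ⟨e, he⟩ := QmodZLoc.smul_surjective (p := p) c hc q
      rw [← he]
      show (c • e) ⊗ₜ[ℤ] m = 0
      rw [TensorProduct.smul_tmul, hM, TensorProduct.tmul_zero]
  | add x y hx hy => rw [hx, hy, add_zero]

end Tensor

lemma exists_bound_smul_mem {N : Type} [AddCommGroup N] (M M' : Submodule ℤ N)
    (hfg : M'.FG) (h : ∀ y ∈ M', ∃ c : ℤ, c ≠ 0 ∧ c • y ∈ M) :
    ∃ c : ℤ, c ≠ 0 ∧ ∀ y ∈ M', c • y ∈ M := by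
  obtain ⟨S, hS⟩ := hfg
  have hmem : ∀ y : S, (y : N) ∈ M' := fun y => hS ▸ Submodule.subset_span y.2
  choose f hf0 hfm using fun (y : S) => h y (hmem y)
  refine ⟨∏ y ∈ S.attach, f y, Finset.prod_ne_zero_iff.mpr (fun y _ => hf0 y), ?_⟩
  set c := ∏ y ∈ S.attach, f y with hc
  have key : M' ≤ Submodule.comap (c • (LinearMap.id : N →ₗ[ℤ] N)) M := by
    rw [← hS, Submodule.span_le]
    intro y hy
    obtain ⟨t, ht⟩ := Finset.dvd_prod_of_mem f (Finset.mem_attach S ⟨y, hy⟩)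
    show (c • (LinearMap.id : N →ₗ[ℤ] N)) y ∈ M
    show c • y ∈ M
    rw [show c = f ⟨y, hy⟩ * t from ht, mul_comm, mul_smul]
    exact M.smul_mem t (hfm ⟨y, hy⟩)
  intro y hy
  exact key hy

section KerBound

variable (p : ℕ)

lemma ker_lTensor_subtype_bound {N : Type} [AddCommGroup N] [Module.Finite ℤ N]
    (M : Submodule ℤ N) :
    ∃ c : ℤ, c ≠ 0 ∧ ∀ x ∈ LinearMap.ker (LinearMap.lTensor (QmodZLoc p) M.subtype),
      c • x = 0 := by
  classical
  haveI := isNoetherian_of_isNoetherianRing_of_finite ℤ N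
  set M' : Submodule ℤ N := Submodule.comap M.mkQ (Submodule.torsion ℤ (N ⧸ M)) with hM'def
  have hMM' : M ≤ M' := by
    intro y hy
    show M.mkQ y ∈ Submodule.torsion ℤ (N ⧸ M)
    have : M.mkQ y = 0 := (Submodule.Quotient.mk_eq_zero M).mpr hy
    rw [this]; exact zero_mem _
  -- boundedness of M'/M
  have hbnd : ∀ y ∈ M', ∃ c : ℤ, c ≠ 0 ∧ c • y ∈ M := by
    intro y hy
    rw [hM'def, Submodule.mem_comap, Submodule.mem_torsion_iff] at hy
    obtain ⟨a, ha⟩ := hy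
    refine ⟨(a : ℤ), nonZeroDivisors.coe_ne_zero a, ?_⟩
    have : M.mkQ ((a : ℤ) • y) = 0 := by rw [map_smul]; exact ha
    exact (Submodule.Quotient.mk_eq_zero M).mp this
  obtain ⟨c, hc0, hc⟩ := exists_bound_smul_mem M M' (IsNoetherian.noetherian M') hbnd
  -- N/M' is torsion-free, finite, hence free
  haveI : NoZeroSMulDivisors ℤ (N ⧸ M') := by
    constructor
    intro a x hax
    rcases eq_or_ne a 0 with h | h
    · exact Or.inl h
    · right
      obtain ⟨y, rfl⟩ := Submodule.mkQ_surjective M' x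
      have hay : a • y ∈ M' := by
        have h2 : M'.mkQ (a • y) = 0 := by rw [map_smul]; exact hax
        exact (Submodule.Quotient.mk_eq_zero M').mp h2
      refine (Submodule.Quotient.mk_eq_zero M').mpr ?_
      rw [hM'def, Submodule.mem_comap, Submodule.mem_torsion_iff] at hay ⊢
      obtain ⟨b, hb⟩ := hay
      refine ⟨b * ⟨a, mem_nonZeroDivisors_of_ne_zero h⟩, ?_⟩
      rw [Submonoid.smul_def, Submonoid.coe_mul, mul_smul]
      rw [Submonoid.smul_def] at hb
      rw [map_smul] at hb
      exact hb
  haveI : Module.Free ℤ (N ⧸ M') := Module.free_of_finite_type_torsion_free'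
  -- splitting and retraction
  obtain ⟨s, hs⟩ := Module.projective_lifting_property M'.mkQ
    (LinearMap.id : (N ⧸ M') →ₗ[ℤ] (N ⧸ M')) (Submodule.mkQ_surjective M')
  have hrmem : ∀ x : N, x - s (M'.mkQ x) ∈ M' := by
    intro x
    rw [← Submodule.Quotient.mk_eq_zero M']
    show M'.mkQ _ = 0
    rw [map_sub]
    have : M'.mkQ (s (M'.mkQ x)) = M'.mkQ x := by
      have := congrArg (fun f => f (M'.mkQ x)) hs
      simpa using this
    rw [this, sub_self]
  set r : N →ₗ[ℤ] M' :=
    LinearMap.codRestrict M' (LinearMap.id - s.comp M'.mkQ) hrmem with hrdef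
  have hretr : r.comp M'.subtype = LinearMap.id := by
    ext y
    show (y : N) - s (M'.mkQ (y : N)) = (y : N)
    have h0 : M'.mkQ (y : N) = 0 := (Submodule.Quotient.mk_eq_zero M').mpr y.2
    rw [h0, map_zero, sub_zero]
  have hinj : Function.Injective (LinearMap.lTensor (QmodZLoc p) M'.subtype) := by
    intro x y hxy
    have := congrArg (LinearMap.lTensor (QmodZLoc p) r) hxy
    rwa [← LinearMap.comp_apply, ← LinearMap.comp_apply, ← LinearMap.lTensor_comp,
      hretr, LinearMap.lTensor_id, LinearMap.id_apply, LinearMap.id_apply] at this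
  -- the multiplication-by-c map
  set j : M →ₗ[ℤ] M' := Submodule.inclusion hMM' with hjdef
  have hsub : M'.subtype.comp j = M.subtype := Submodule.subtype_comp_inclusion M M' hMM'
  have hcmem : ∀ y : M', (c • M'.subtype) y ∈ M := fun y => hc y y.2
  set μ : M' →ₗ[ℤ] M := LinearMap.codRestrict M (c • M'.subtype) hcmem with hμdef
  have hμj : μ.comp j = c • (LinearMap.id : M →ₗ[ℤ] M) := by
    ext y
    show c • ((y : N)) = c • (y : N)
    rfl
  refine ⟨c, hc0, ?_⟩
  intro x hx
  rw [LinearMap.mem_ker] at hx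
  have hjx : LinearMap.lTensor (QmodZLoc p) j x = 0 := by
    apply hinj
    rw [← LinearMap.comp_apply, ← LinearMap.lTensor_comp, hsub, hx, map_zero]
  have : LinearMap.lTensor (QmodZLoc p) (μ.comp j) x = 0 := by
    rw [LinearMap.lTensor_comp, LinearMap.comp_apply, hjx, map_zero]
  rw [hμj, LinearMap.lTensor_smul, LinearMap.lTensor_id] at this
  exact this

end KerBound

section Dfin

variable {p : ℕ}

lemma ZLoc.natCast_mem (p : ℕ) (a : ℕ) : ((a : ℚ)) ∈ (ZLoc p).toAddSubgroup := by
  have := ZLoc.intCast_mem p (a : ℤ)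
  push_cast at this
  exact this

lemma finite_D_pow_torsion (hp : p.Prime) (a : ℕ) :
    Finite {x : QmodZLoc p // ((p:ℤ)^a) • x = 0} := by
  haveI : NeZero (p ^ a) := ⟨pow_ne_zero a hp.ne_zero⟩
  have hpa0 : ((p:ℚ))^a ≠ 0 := pow_ne_zero a (by exact_mod_cast hp.ne_zero)
  have hcast : ((((p:ℤ)^a : ℤ)) : ℚ) = (p:ℚ)^a := by push_cast; ring
  set f : ZMod (p ^ a) → {x : QmodZLoc p // ((p:ℤ)^a) • x = 0} := fun cb =>
    ⟨QuotientAddGroup.mk ((cb.val : ℚ) / (p:ℚ)^a), by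
      rw [QmodZLoc.zsmul_mk]
      rw [QuotientAddGroup.eq_zero_iff]
      rw [hcast]
      have h2 : (p:ℚ)^a * ((cb.val : ℚ) / (p:ℚ)^a) = (cb.val : ℚ) := by field_simp
      rw [h2]
      exact ZLoc.natCast_mem p _⟩ with hfdef
  apply Finite.of_surjective f
  rintro ⟨x, hx⟩
  obtain ⟨q, rfl⟩ := QuotientAddGroup.mk_surjective x
  rw [QmodZLoc.zsmul_mk, QuotientAddGroup.eq_zero_iff] at hx
  set s : ℚ := ((((p:ℤ)^a : ℤ)) : ℚ) * q with hsdef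
  have hsmem : p.Coprime s.den := hx
  have hdcop : Nat.Coprime s.den (p ^ a) := Nat.Coprime.pow_right a hsmem.symm
  set U : (ZMod (p ^ a))ˣ := ZMod.unitOfCoprime s.den hdcop with hUdef
  have hUcoe : (U : ZMod (p ^ a)) = (s.den : ZMod (p ^ a)) := rfl
  set cb : ZMod (p ^ a) := (s.num : ZMod (p ^ a)) * ((U⁻¹ : (ZMod (p ^ a))ˣ) : ZMod (p ^ a))
    with hcbdef
  have hcb : (((cb.val : ℤ)) : ZMod (p ^ a)) = cb := by
    rw [Int.cast_natCast, ZMod.natCast_val, ZMod.cast_id]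
  have hcalc : cb * ((s.den : ℕ) : ZMod (p ^ a)) = (s.num : ZMod (p ^ a)) := by
    rw [hcbdef, ← hUcoe, mul_assoc, Units.inv_mul, mul_one]
  have hdvd : ((p:ℤ)^a) ∣ (s.num - (cb.val : ℤ) * s.den) := by
    have h0 : ((s.num - (cb.val : ℤ) * s.den : ℤ) : ZMod (p ^ a)) = 0 := by
      rw [Int.cast_sub, Int.cast_mul, hcb, Int.cast_natCast, hcalc, sub_self]
    have h1 := (ZMod.intCast_zmod_eq_zero_iff_dvd _ (p ^ a)).mp h0
    exact_mod_cast h1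
  obtain ⟨t, ht⟩ := hdvd
  refine ⟨cb, ?_⟩
  rw [hfdef]
  apply Subtype.ext
  show QuotientAddGroup.mk _ = QuotientAddGroup.mk q
  rw [QuotientAddGroup.eq]
  have hden0 : ((s.den : ℚ)) ≠ 0 := by exact_mod_cast s.den_nz
  have hsden : s * (s.den : ℚ) = (s.num : ℚ) := by
    conv_lhs => lhs; rw [← Rat.num_div_den s]
    exact div_mul_cancel₀ _ hden0
  have htQ : (s.num : ℚ) - (cb.val : ℚ) * (s.den : ℚ) = (p:ℚ)^a * (t : ℚ) := by
    have := congrArg (fun z : ℤ => ((z : ℚ))) ht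
    push_cast at this
    exact this
  have hq : q = s / ((p:ℚ))^a := by
    rw [hsdef, hcast]; field_simp
  set v : ℚ := ((cb.val : ℕ) : ℚ) with hvdef
  have hval : -(v / (p:ℚ)^a) + q = (t : ℚ) / (s.den : ℚ) := by
    rw [hq, show -(v / (p:ℚ)^a) + s / (p:ℚ)^a = (s - v) / (p:ℚ)^a by ring,
      div_eq_div_iff hpa0 hden0]
    linear_combination hsden + htQ
  rw [hval]
  show p.Coprime _
  have hdvd2 : ((t : ℚ) / (s.den : ℚ)).den ∣ s.den := by
    have h1 : ((Rat.divInt t (s.den : ℤ)).den : ℤ) ∣ (s.den : ℤ) := Rat.den_dvd _ _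
    rw [Rat.divInt_eq_div] at h1
    push_cast at h1
    exact_mod_cast h1
  exact Nat.Coprime.coprime_dvd_right hdvd2 hsmem

end Dfin

section TensorFin

variable {p : ℕ}

set_option maxHeartbeats 1000000 in
lemma finite_tensor_pow_torsion (hp : p.Prime) (M : Type) [AddCommGroup M]
    [Module.Finite ℤ M] (a : ℕ) :
    Finite {x : QmodZLoc p ⊗[ℤ] M // ((p:ℤ)^a) • x = 0} := by
  classical
  haveI := isNoetherian_of_isNoetherianRing_of_finite ℤ M
  set T : Submodule ℤ M := Submodule.torsion ℤ M with hT
  have hbnd : ∀ y ∈ T, ∃ c : ℤ, c ≠ 0 ∧ c • y ∈ (⊥ : Submodule ℤ M) := by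
    intro y hy
    rw [hT, Submodule.mem_torsion_iff] at hy
    obtain ⟨b, hb⟩ := hy
    rw [Submonoid.smul_def] at hb
    exact ⟨(b:ℤ), nonZeroDivisors.coe_ne_zero b, by rw [Submodule.mem_bot]; exact hb⟩
  obtain ⟨c, hc0, hc⟩ := exists_bound_smul_mem ⊥ T (IsNoetherian.noetherian T) hbnd
  have hcT : ∀ t : T, c • t = 0 := by
    intro t
    have h1 := hc (t : M) t.2
    rw [Submodule.mem_bot] at h1
    exact Subtype.ext (by simpa using h1)
  have hzero : ∀ x : QmodZLoc p ⊗[ℤ] (T : Type), x = 0 :=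
    tensor_eq_zero p T c hc0 hcT
  have hex := lTensor_exact (QmodZLoc p) (LinearMap.exact_subtype_mkQ T)
    (Submodule.mkQ_surjective T)
  have hinj : Function.Injective (LinearMap.lTensor (QmodZLoc p) T.mkQ) := by
    intro x y hxy
    have h0 : LinearMap.lTensor (QmodZLoc p) T.mkQ (x - y) = 0 := by
      rw [map_sub, hxy, sub_self]
    obtain ⟨w, hw⟩ := (hex (x - y)).mp h0
    rw [hzero w, map_zero] at hw
    have h2 := hw.symm
    rw [sub_eq_zero] at h2
    exact h2
  haveI : Module.Free ℤ (M ⧸ T) := Module.free_of_finite_type_torsion_free'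
  set ι := Module.Free.ChooseBasisIndex ℤ (M ⧸ T) with hι
  set b : Module.Basis ι ℤ (M ⧸ T) := Module.Free.chooseBasis ℤ (M ⧸ T) with hb
  set g : (QmodZLoc p ⊗[ℤ] (M ⧸ T)) ≃ₗ[ℤ] (ι →₀ QmodZLoc p) :=
    (TensorProduct.congr (LinearEquiv.refl ℤ (QmodZLoc p)) b.repr).trans
      (TensorProduct.finsuppScalarRight ℤ ℤ (QmodZLoc p) ι) with hg
  haveI : Finite {y : QmodZLoc p // ((p:ℤ)^a) • y = 0} := finite_D_pow_torsion hp a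
  set Φ : {x : QmodZLoc p ⊗[ℤ] M // ((p:ℤ)^a) • x = 0} →
      (ι → {y : QmodZLoc p // ((p:ℤ)^a) • y = 0}) := fun x i =>
    ⟨g (LinearMap.lTensor (QmodZLoc p) T.mkQ x.1) i, by
      have h1 : ((p:ℤ)^a) • (g (LinearMap.lTensor (QmodZLoc p) T.mkQ x.1)) = 0 := by
        rw [← map_smul, ← map_smul, x.2, map_zero, map_zero]
      calc ((p:ℤ)^a) • (g (LinearMap.lTensor (QmodZLoc p) T.mkQ x.1)) i
          = (((p:ℤ)^a) • (g (LinearMap.lTensor (QmodZLoc p) T.mkQ x.1))) i := by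
            rw [Finsupp.smul_apply]
        _ = 0 := by rw [h1]; rfl⟩ with hΦ
  have hΦinj : Function.Injective Φ := by
    intro x y hxy
    apply Subtype.ext
    apply hinj
    apply g.injective
    apply Finsupp.ext
    intro i
    have := congrArg (fun f => (f i : QmodZLoc p)) hxy
    simpa [hΦ] using this
  exact Finite.of_injective Φ hΦinj

end TensorFin

section KerFin

variable {p : ℕ}

lemma ker_lTensor_subtype_props (hp : p.Prime) {N : Type} [AddCommGroup N]
    [Module.Finite ℤ N] (M : Submodule ℤ N) :
    Finite (LinearMap.ker (LinearMap.lTensor (QmodZLoc p) M.subtype)) := by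
  classical
  haveI := isNoetherian_of_isNoetherianRing_of_finite ℤ N
  haveI : Module.Finite ℤ M := Module.Finite.iff_fg.mpr (IsNoetherian.noetherian M)
  obtain ⟨c, hc0, hc⟩ := ker_lTensor_subtype_bound p M
  have hcna : c.natAbs ≠ 0 := Int.natAbs_ne_zero.mpr hc0
  set a := c.natAbs.factorization p with ha
  set u := c.natAbs / p ^ a with hu
  have hcu : p ^ a * u = c.natAbs := Nat.ordProj_mul_ordCompl_eq_self c.natAbs p
  have hpu : (p:ℤ)^a * (u:ℤ) = ((c.natAbs : ℕ) : ℤ) := by exact_mod_cast hcu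
  have hucop : Nat.Coprime p u := Nat.coprime_ordCompl hp hcna
  have key : ∀ x ∈ LinearMap.ker (LinearMap.lTensor (QmodZLoc p) M.subtype),
      ((p:ℤ)^a) • x = 0 := by
    intro x hx
    have hxc : ((c.natAbs : ℕ) : ℤ) • x = 0 := by
      rcases Int.natAbs_eq c with h | h
      · rw [← h]; exact hc x hx
      · have : ((c.natAbs : ℕ) : ℤ) = -c := by omega
        rw [this, neg_smul, hc x hx, neg_zero]
    obtain ⟨j, hj⟩ := tensor_pow_smul p hp M x
    have hco : IsCoprime ((u : ℕ) : ℤ) (((p ^ j : ℕ) : ℕ) : ℤ) :=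
      Nat.isCoprime_iff_coprime.mpr (Nat.Coprime.pow_right j hucop.symm)
    obtain ⟨α, β, h1⟩ := hco
    have h1' : α * (u : ℤ) + β * (p:ℤ)^j = 1 := by push_cast at h1; linarith
    have hscal : (p:ℤ)^a = α * ((p:ℤ)^a * (u:ℤ)) + (β * (p:ℤ)^a) * (p:ℤ)^j := by
      linear_combination (-(p:ℤ)^a) * h1'
    rw [hscal, add_smul, mul_smul, hpu, hxc, smul_zero, mul_smul, hj, smul_zero, add_zero]
  haveI : Finite {x : QmodZLoc p ⊗[ℤ] (M : Type) // ((p:ℤ)^a) • x = 0} :=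
    finite_tensor_pow_torsion hp M a
  set emb : LinearMap.ker (LinearMap.lTensor (QmodZLoc p) M.subtype) →
      {x : QmodZLoc p ⊗[ℤ] (M : Type) // ((p:ℤ)^a) • x = 0} :=
    fun x => ⟨x.1, key x.1 x.2⟩ with hemb
  have hembinj : Function.Injective emb := by
    intro x y hxy
    have h2 : (emb x).1 = (emb y).1 := congrArg Subtype.val hxy
    exact Subtype.ext h2
  exact Finite.of_injective emb hembinj

end KerFin


set_option maxHeartbeats 3000000 in
/-- Let `C` be a chain complex of finitely generated abelian groups.  Then for every `n`, the
natural homomorphism `(ℚ/ℤ_(p)) ⊗ Hₙ(C) → Hₙ((ℚ/ℤ_(p)) ⊗ C)` (characterized by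
`q ⊗ [z] ↦ [q ⊗ z]`) has kernel and cokernel that are finite `p`-groups. -/
theorem tensor_homology_comparison_finite_pGroup
    (p : ℕ) (hp : p.Prime)
    (C : ℤ → Type) [∀ n, AddCommGroup (C n)] (hfg : ∀ n, AddGroup.FG (C n))
    (d : ∀ n : ℤ, C (n + 1) →ₗ[ℤ] C n)
    (hdd : ∀ n : ℤ, (d n).comp (d (n + 1)) = 0)
    (n : ℤ)
    (φ : (QmodZLoc p ⊗[ℤ] homologyAt C d n) →+
      homologyAt (fun m => QmodZLoc p ⊗[ℤ] C m) (fun m => LinearMap.lTensor _ (d m)) n)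
    (hφ : ∀ (q : QmodZLoc p) (z : C (n + 1)) (hz : z ∈ LinearMap.ker (d n)),
      φ (q ⊗ₜ[ℤ] Submodule.Quotient.mk ⟨z, hz⟩) =
        Submodule.Quotient.mk
          ⟨q ⊗ₜ[ℤ] z, by
            change LinearMap.lTensor _ (d n) (q ⊗ₜ[ℤ] z) = 0
            simp only [LinearMap.lTensor_tmul, LinearMap.mem_ker.mp hz, tmul_zero]⟩) :
    (Finite φ.ker ∧ ∀ x : φ.ker, ∃ k : ℕ, p ^ k • x = 0) ∧
      (Finite (_ ⧸ φ.range) ∧ ∀ x : (_ ⧸ φ.range), ∃ k : ℕ, p ^ k • x = 0) := by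
  classical
  haveI : ∀ m : ℤ, Module.Finite ℤ (C m) := fun m =>
    Module.Finite.iff_addGroup_fg.mpr (hfg m)
  -- notation
  set Z : Submodule ℤ (C (n+1)) := LinearMap.ker (d n) with hZ
  set B₀ : Submodule ℤ Z := Submodule.comap Z.subtype (LinearMap.range (d (n+1))) with hB₀
  set ψ :=
    LinearMap.lTensor (QmodZLoc p) Z.subtype with hψ
  set Z' :=
    LinearMap.ker (LinearMap.lTensor (QmodZLoc p) (d n)) with hZ'
  have hdZ : (d n).comp Z.subtype = 0 := by
    ext z; exact z.2
  have hψmem : ∀ y, ψ y ∈ Z' := by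
    intro y
    show LinearMap.lTensor (QmodZLoc p) (d n) (ψ y) = 0
    rw [hψ, ← LinearMap.comp_apply, ← LinearMap.lTensor_comp, hdZ, LinearMap.lTensor_zero]
    rfl
  set ψ' := LinearMap.codRestrict Z' ψ hψmem with hψ'
  set B₀' :=
    Submodule.comap Z'.subtype (LinearMap.range (LinearMap.lTensor (QmodZLoc p) (d (n+1))))
    with hB₀'
  set π :=
    LinearMap.lTensor (QmodZLoc p) B₀.mkQ with hπ
  set θ := B₀'.mkQ.comp ψ' with hθ
  -- the boundary map into Z
  have hde : ∀ w : C (n+1+1), (d (n+1)) w ∈ Z := by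
    intro w
    have := congrArg (fun f => f w) (hdd n)
    exact this
  set e : C (n+1+1) →ₗ[ℤ] Z := LinearMap.codRestrict Z (d (n+1)) hde with he
  have h_e : Z.subtype.comp e = d (n+1) := LinearMap.subtype_comp_codRestrict _ _ hde
  have hψe : ψ.comp (LinearMap.lTensor (QmodZLoc p) e) =
      LinearMap.lTensor (QmodZLoc p) (d (n+1)) := by
    rw [hψ, ← LinearMap.lTensor_comp, h_e]
  have hmkQe : B₀.mkQ.comp e = 0 := by
    ext w
    show B₀.mkQ (e w) = 0
    exact (Submodule.Quotient.mk_eq_zero B₀).mpr ⟨w, rfl⟩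
  have hπe : π.comp (LinearMap.lTensor (QmodZLoc p) e) = 0 := by
    rw [hπ, ← LinearMap.lTensor_comp, hmkQe, LinearMap.lTensor_zero]
  -- commutation
  have hcomm : ∀ y : QmodZLoc p ⊗[ℤ] Z, φ (π y) = θ y := by
    intro y
    induction y using TensorProduct.induction_on with
    | zero => simp only [map_zero]; rfl
    | tmul q z =>
        have h1 : π (q ⊗ₜ[ℤ] z) = q ⊗ₜ[ℤ] (Submodule.Quotient.mk (⟨z.1, z.2⟩ : Z)) := rfl
        rw [h1, hφ q z.1 z.2]
        rfl
    | add y₁ y₂ hy₁ hy₂ => rw [map_add, map_add, map_add, hy₁, hy₂]; rfl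
  ---- KERNEL ----
  have hkerψ_fin : Finite (LinearMap.ker ψ) := ker_lTensor_subtype_props hp Z
  have hfker : ∀ y : LinearMap.ker ψ, π y.1 ∈ φ.ker := by
    intro y
    rw [AddMonoidHom.mem_ker, hcomm, hθ]
    have : ψ' y.1 = 0 := Subtype.ext y.2
    rw [LinearMap.comp_apply, this, map_zero]
    rfl
  set fker : LinearMap.ker ψ → φ.ker := fun y => ⟨π y.1, hfker y⟩ with hfkerdef
  have hfker_surj : Function.Surjective fker := by
    rintro ⟨x, hx⟩
    obtain ⟨y, hy⟩ := LinearMap.lTensor_surjective (QmodZLoc p)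
      (Submodule.mkQ_surjective B₀) x
    rw [AddMonoidHom.mem_ker] at hx
    have hθy : θ y = 0 := by rw [← hcomm y, hy]; exact hx
    have hmem : ψ' y ∈ B₀' := by
      rw [hθ, LinearMap.comp_apply] at hθy
      exact (Submodule.Quotient.mk_eq_zero B₀').mp hθy
    rw [hB₀', Submodule.mem_comap] at hmem
    obtain ⟨v, hv⟩ := hmem
    set y₂ := y - LinearMap.lTensor (QmodZLoc p) e v with hy₂
    have hy₂mem : y₂ ∈ LinearMap.ker ψ := by
      rw [LinearMap.mem_ker, hy₂, map_sub]
      have : ψ (LinearMap.lTensor (QmodZLoc p) e v) =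
          LinearMap.lTensor (QmodZLoc p) (d (n+1)) v := by
        rw [← hψe]; rfl
      rw [this, hv]
      simp only [Submodule.coe_subtype]
      exact sub_self _
    refine ⟨⟨y₂, hy₂mem⟩, ?_⟩
    apply Subtype.ext
    show π y₂ = x
    rw [hy₂, map_sub, hy]
    have : π (LinearMap.lTensor (QmodZLoc p) e v) = 0 := by
      rw [← LinearMap.comp_apply, hπe]; rfl
    rw [this, sub_zero]
  have hker_fin : Finite φ.ker := Finite.of_surjective fker hfker_surj
  have hker_tors : ∀ x : φ.ker, ∃ k : ℕ, p ^ k • x = 0 := by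
    intro x
    obtain ⟨k, hk⟩ := tensor_pow_smul p hp (homologyAt C d n) x.1
    refine ⟨k, ?_⟩
    apply Subtype.ext
    show (p ^ k : ℕ) • (x : QmodZLoc p ⊗[ℤ] homologyAt C d n) = 0
    have : ((p ^ k : ℕ) : ℤ) • (x : QmodZLoc p ⊗[ℤ] homologyAt C d n) =
        (p ^ k : ℕ) • (x : QmodZLoc p ⊗[ℤ] homologyAt C d n) := natCast_zsmul _ _
    rw [← this]
    have hcast : ((p ^ k : ℕ) : ℤ) = (p:ℤ)^k := by push_cast; ring
    rw [hcast]
    exact hk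
  ---- COKERNEL ----
  set R : Submodule ℤ (C n) := LinearMap.range (d n) with hR
  set ρ : C (n+1) →ₗ[ℤ] R := (d n).rangeRestrict with hρ
  have hexact0 : Function.Exact Z.subtype ρ := by
    rw [LinearMap.exact_iff]
    rw [hρ, LinearMap.ker_rangeRestrict, Submodule.range_subtype]
  have htexact := lTensor_exact (QmodZLoc p) hexact0 (d n).surjective_rangeRestrict
  have hKR_fin : Finite (LinearMap.ker (LinearMap.lTensor (QmodZLoc p) R.subtype)) :=
    ker_lTensor_subtype_props hp R
  have hRρ : R.subtype.comp ρ = d n := LinearMap.subtype_comp_codRestrict _ _ _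
  have hχmem : ∀ z : Z', LinearMap.lTensor (QmodZLoc p) ρ z.1 ∈
      LinearMap.ker (LinearMap.lTensor (QmodZLoc p) R.subtype) := by
    intro z
    rw [LinearMap.mem_ker, ← LinearMap.comp_apply, ← LinearMap.lTensor_comp, hRρ]
    exact z.2
  set χ : Z' → LinearMap.ker (LinearMap.lTensor (QmodZLoc p) R.subtype) :=
    fun z => ⟨LinearMap.lTensor (QmodZLoc p) ρ z.1, hχmem z⟩ with hχ
  set g : Z' → ((Z' ⧸ B₀') ⧸ φ.range) :=
    fun z => QuotientAddGroup.mk (B₀'.mkQ z) with hg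
  have hg_surj : Function.Surjective g := by
    intro x
    obtain ⟨h, rfl⟩ := QuotientAddGroup.mk_surjective x
    obtain ⟨z, rfl⟩ := Submodule.mkQ_surjective B₀' h
    exact ⟨z, rfl⟩
  have hgχ : ∀ z₁ z₂ : Z', χ z₁ = χ z₂ → g z₁ = g z₂ := by
    intro z₁ z₂ h12
    have hval : LinearMap.lTensor (QmodZLoc p) ρ (z₁.1 - z₂.1) = 0 := by
      rw [map_sub]
      have := congrArg Subtype.val h12
      rw [sub_eq_zero]
      exact this
    obtain ⟨y, hy⟩ := (htexact _).mp hval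
    -- z₂ - z₁ = ψ' (-y)
    have hz21 : z₂ - z₁ = ψ' (-y) := by
      apply Subtype.ext
      show z₂.1 - z₁.1 = ψ (-y)
      rw [map_neg, hy, neg_sub]
    rw [hg]
    show QuotientAddGroup.mk (B₀'.mkQ z₁) = QuotientAddGroup.mk (B₀'.mkQ z₂)
    refine QuotientAddGroup.eq.mpr ?_
    have : -B₀'.mkQ z₁ + B₀'.mkQ z₂ = B₀'.mkQ (z₂ - z₁) := by
      rw [map_sub]; abel
    rw [this, hz21]
    refine ⟨π (-y), ?_⟩
    rw [hcomm, hθ]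
    rfl
  set sec : ((Z' ⧸ B₀') ⧸ φ.range) → Z' := Function.surjInv hg_surj with hsec
  have hcok_inj : Function.Injective (χ ∘ sec) := by
    intro q₁ q₂ h12
    have := hgχ _ _ h12
    rwa [Function.surjInv_eq hg_surj, Function.surjInv_eq hg_surj] at this
  have hcok_fin : Finite ((Z' ⧸ B₀') ⧸ φ.range) := Finite.of_injective _ hcok_inj
  have hcok_tors : ∀ x : ((Z' ⧸ B₀') ⧸ φ.range), ∃ k : ℕ, p ^ k • x = 0 := by
    intro x
    obtain ⟨h, rfl⟩ := QuotientAddGroup.mk_surjective x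
    obtain ⟨z, rfl⟩ := Submodule.mkQ_surjective B₀' h
    obtain ⟨k, hk⟩ := tensor_pow_smul p hp (C (n+1)) z.1
    refine ⟨k, ?_⟩
    have hzk : (p ^ k : ℕ) • z = 0 := by
      apply Subtype.ext
      show (p ^ k : ℕ) • z.1 = 0
      have h1 : ((p ^ k : ℕ) : ℤ) • z.1 = (p ^ k : ℕ) • z.1 := natCast_zsmul _ _
      rw [← h1]
      have hcast : ((p ^ k : ℕ) : ℤ) = (p:ℤ)^k := by push_cast; ring
      rw [hcast]
      exact hk
    have h2 : (p ^ k : ℕ) • (B₀'.mkQ z) = 0 := by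
      rw [← map_nsmul, hzk, map_zero]
    erw [← QuotientAddGroup.mk_nsmul, h2]
    rfl
  exact ⟨⟨hker_fin, hker_tors⟩, ⟨hcok_fin, hcok_tors⟩⟩
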